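/- Let π* be a uniform rationality-compatible equilibrium (uRCE), let s be an off-path signal, and let θ_s be a type such that D°(θ_s,s;π*) is not contained in ∪_{θ'≠θ_s} D(θ',s;π*). Then: (i) s ∈ S_{θ_s}; (ii) no type θ' ≠ θ_s satisfies θ' ≿_s θ_s; (iii) the point-mass belief δ_{θ_s} belongs to P̂(s), and for every a* ∈ BR(δ_{θ_s}, s), the profile obtained from π* by replacing π₂*(·|s) with the point mass on a* (leaving all other components unchanged) is again a uRCE. -/
import Mathlib


open scoped Classical
open Finset Filter

noncomputable section

/-- `p` is a probability distribution on the finite type `X`. -/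
def IsDist {X : Type*} [Fintype X] (p : X → ℝ) : Prop :=
  (∀ x, 0 ≤ p x) ∧ ∑ x, p x = 1

variable {Θ S A : Type*} [Fintype Θ] [Fintype S] [Fintype A]

/-- Sender's expected payoff `u₁(θ, s, π₂(·|s))` from signal `s` when the receiver plays `π₂`. -/
def u1R (u₁ : Θ → S → A → ℝ) (π₂ : S → A → ℝ) (θ : Θ) (s : S) : ℝ :=
  ∑ a, π₂ s a * u₁ θ s a

/-- Receiver's expected payoff of action `a` after signal `s` under belief `p`. -/
def expU2 (u₂ : Θ → S → A → ℝ) (p : Θ → ℝ) (s : S) (a : A) : ℝ :=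
  ∑ θ, p θ * u₂ θ s a

/-- `BR(p, s)`: pure best responses to belief `p` after signal `s`. -/
def BRb (u₂ : Θ → S → A → ℝ) (p : Θ → ℝ) (s : S) : Set A :=
  {a | ∀ a', expU2 u₂ p s a' ≤ expU2 u₂ p s a}

/-- `A_s^BR`: actions that best respond to some belief after `s`. -/
def ABR (u₂ : Θ → S → A → ℝ) (s : S) : Set A :=
  {a | ∃ p, IsDist p ∧ a ∈ BRb u₂ p s}

/-- Membership in `Π₂•`: a receiver behavior strategy supported on `A_s^BR` after every `s`. -/
def Rational2 (u₂ : Θ → S → A → ℝ) (π₂ : S → A → ℝ) : Prop :=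
  (∀ s, IsDist (π₂ s)) ∧ ∀ s a, π₂ s a ≠ 0 → a ∈ ABR u₂ s

/-- `u₁(θ,s,π₂(·|s)) ≥ max_{s' ≠ s} u₁(θ,s',π₂(·|s'))`. -/
def WeakBest (u₁ : Θ → S → A → ℝ) (π₂ : S → A → ℝ) (θ : Θ) (s : S) : Prop :=
  ∀ s', s' ≠ s → u1R u₁ π₂ θ s' ≤ u1R u₁ π₂ θ s

/-- `u₁(θ,s,π₂(·|s)) > max_{s' ≠ s} u₁(θ,s',π₂(·|s'))`. -/
def StrictBest (u₁ : Θ → S → A → ℝ) (π₂ : S → A → ℝ) (θ : Θ) (s : S) : Prop :=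
  ∀ s', s' ≠ s → u1R u₁ π₂ θ s' < u1R u₁ π₂ θ s

/-- `θ' ≿_s θ''`: `s` is more rationally-compatible with `θ'` than with `θ''`. -/
def MoreCompat (u₁ u₂ : Θ → S → A → ℝ) (s : S) (θ' θ'' : Θ) : Prop :=
  ∀ π₂, Rational2 u₂ π₂ → WeakBest u₁ π₂ θ'' s → StrictBest u₁ π₂ θ' s

/-- `s` maximizes `s' ↦ u₁(θ, s', π₂(·|s'))`. -/
def GlobalBest (u₁ : Θ → S → A → ℝ) (π₂ : S → A → ℝ) (θ : Θ) (s : S) : Prop :=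
  ∀ s', u1R u₁ π₂ θ s' ≤ u1R u₁ π₂ θ s

/-- `S_θ`: signals that best respond to some (not necessarily rational) receiver strategy. -/
def Sθ (u₁ : Θ → S → A → ℝ) (θ : Θ) : Set S :=
  {s | ∃ π₂ : S → A → ℝ, (∀ s', IsDist (π₂ s')) ∧ GlobalBest u₁ π₂ θ s}

/-- `Θ_s`: types for which `s` is not dominated. -/
def Θtypes (u₁ : Θ → S → A → ℝ) (s : S) : Set Θ := {θ | s ∈ Sθ u₁ θ}

/-- Membership in `Π₁•`. -/
def Rational1 (u₁ : Θ → S → A → ℝ) (π₁ : Θ → S → ℝ) : Prop :=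
  (∀ θ, IsDist (π₁ θ)) ∧ ∀ θ s, π₁ θ s ≠ 0 → s ∈ Sθ u₁ θ

/-- Nash equilibrium of the signaling game. -/
def NashEq (lam : Θ → ℝ) (u₁ u₂ : Θ → S → A → ℝ)
    (π₁ : Θ → S → ℝ) (π₂ : S → A → ℝ) : Prop :=
  (∀ θ, IsDist (π₁ θ)) ∧ (∀ s, IsDist (π₂ s)) ∧
  (∀ θ s, π₁ θ s ≠ 0 → GlobalBest u₁ π₂ θ s) ∧
  (∀ s, (∃ θ, π₁ θ s ≠ 0) → ∀ a, π₂ s a ≠ 0 →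
    ∀ a', ∑ θ, lam θ * π₁ θ s * u₂ θ s a' ≤ ∑ θ, lam θ * π₁ θ s * u₂ θ s a)

/-- Equilibrium expected payoff `E_π[u₁ | θ]`. -/
def eqPayoff (u₁ : Θ → S → A → ℝ) (π₁ : Θ → S → ℝ) (π₂ : S → A → ℝ) (θ : Θ) : ℝ :=
  ∑ s, π₁ θ s * u1R u₁ π₂ θ s

/-- `s` is off the path of play of `π₁`. -/
def OffPath (π₁ : Θ → S → ℝ) (s : S) : Prop := ∀ θ, π₁ θ s = 0

/-- `J̃(s, π)`: types for which some best response to `s` weakly improves on the equilibrium. -/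
def Jt (u₁ u₂ : Θ → S → A → ℝ) (π₁ : Θ → S → ℝ) (π₂ : S → A → ℝ) (s : S) : Set Θ :=
  {θ | ∃ a ∈ ABR u₂ s, eqPayoff u₁ π₁ π₂ θ ≤ u₁ θ s a}

/-- The odds-ratio condition defining `P_{θ'▷θ''}`. -/
def OddsLe (lam : Θ → ℝ) (θ' θ'' : Θ) (p : Θ → ℝ) : Prop :=
  p θ'' * lam θ' ≤ lam θ'' * p θ'

/-- `Δ(T)`: beliefs supported on `T`. -/
def DeltaOn {Θ : Type*} [Fintype Θ] (T : Set Θ) : Set (Θ → ℝ) :=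
  {p | IsDist p ∧ ∀ θ ∉ T, p θ = 0}

/-- `P̃(s, π)`: rationality-compatible beliefs at profile `π`. -/
def Pt (lam : Θ → ℝ) (u₁ u₂ : Θ → S → A → ℝ) (π₁ : Θ → S → ℝ) (π₂ : S → A → ℝ)
    (s : S) : Set (Θ → ℝ) :=
  if (Jt u₁ u₂ π₁ π₂ s).Nonempty then
    DeltaOn (Jt u₁ u₂ π₁ π₂ s) ∩
      {p | ∀ θ' θ'', MoreCompat u₁ u₂ s θ' θ'' → OddsLe lam θ' θ'' p}
  else DeltaOn (Θtypes u₁ s)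

/-- Rationality-compatible equilibrium. -/
def RCE (lam : Θ → ℝ) (u₁ u₂ : Θ → S → A → ℝ)
    (π₁ : Θ → S → ℝ) (π₂ : S → A → ℝ) : Prop :=
  NashEq lam u₁ u₂ π₁ π₂ ∧
  ∀ s a, π₂ s a ≠ 0 → ∃ p ∈ Pt lam u₁ u₂ π₁ π₂ s, a ∈ BRb u₂ p s

/-- `P̂(s)`: uniformly rationality-compatible beliefs. -/
def Ph (lam : Θ → ℝ) (u₁ u₂ : Θ → S → A → ℝ) (s : S) : Set (Θ → ℝ) :=
  DeltaOn (Θtypes u₁ s) ∩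
    {p | ∀ θ' θ'', MoreCompat u₁ u₂ s θ' θ'' → OddsLe lam θ' θ'' p}

/-- Uniform rationality-compatible equilibrium. -/
def URCE (lam : Θ → ℝ) (u₁ u₂ : Θ → S → A → ℝ)
    (π₁ : Θ → S → ℝ) (π₂ : S → A → ℝ) : Prop :=
  NashEq lam u₁ u₂ π₁ π₂ ∧
  ∀ θ s, OffPath π₁ s → ∀ a, (∃ p ∈ Ph lam u₁ u₂ s, a ∈ BRb u₂ p s) →
    u₁ θ s a ≤ eqPayoff u₁ π₁ π₂ θ

/-- Receiver's expected payoff of a mixed action `α` after `s` under belief `p`. -/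
def expU2m (u₂ : Θ → S → A → ℝ) (p : Θ → ℝ) (s : S) (α : A → ℝ) : ℝ :=
  ∑ θ, p θ * ∑ a, α a * u₂ θ s a

/-- `MBR(p, s)`: mixed best responses to belief `p` after `s`. -/
def MBRb (u₂ : Θ → S → A → ℝ) (p : Θ → ℝ) (s : S) : Set (A → ℝ) :=
  {α | IsDist α ∧ ∀ α', IsDist α' → expU2m u₂ p s α' ≤ expU2m u₂ p s α}

/-- `MBR(s)`. -/
def MBR (u₂ : Θ → S → A → ℝ) (s : S) : Set (A → ℝ) :=
  {α | ∃ p, IsDist p ∧ α ∈ MBRb u₂ p s}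

/-- `u₁(θ, s, α)` for a mixed action `α`. -/
def u1m (u₁ : Θ → S → A → ℝ) (θ : Θ) (s : S) (α : A → ℝ) : ℝ :=
  ∑ a, α a * u₁ θ s a

/-- `D(θ, s; π)`. -/
def Dset (u₁ u₂ : Θ → S → A → ℝ) (π₁ : Θ → S → ℝ) (π₂ : S → A → ℝ)
    (θ : Θ) (s : S) : Set (A → ℝ) :=
  {α | α ∈ MBR u₂ s ∧ eqPayoff u₁ π₁ π₂ θ < u1m u₁ θ s α}

/-- `D°(θ, s; π)`. -/
def D0set (u₁ u₂ : Θ → S → A → ℝ) (π₁ : Θ → S → ℝ) (π₂ : S → A → ℝ)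
    (θ : Θ) (s : S) : Set (A → ℝ) :=
  {α | α ∈ MBR u₂ s ∧ eqPayoff u₁ π₁ π₂ θ = u1m u₁ θ s α}

/- ----------------- auxiliary lemmas ----------------- -/

lemma isDist_exists_ne {X : Type*} [Fintype X] {p : X → ℝ} (hp : IsDist p) : ∃ x, p x ≠ 0 := by
  by_contra hc
  push_neg at hc
  have h2 := hp.2
  simp only [hc, Finset.sum_const_zero] at h2
  norm_num at h2

lemma pointmass_isDist {X : Type*} [Fintype X] (x0 : X) :
    IsDist (fun x => if x = x0 then (1 : ℝ) else 0) := by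
  constructor
  · intro x; by_cases h : x = x0 <;> simp [h]
  · simp

lemma sum_pointmass {X : Type*} [Fintype X] (c : X) (f : X → ℝ) :
    ∑ x, (if x = c then (1 : ℝ) else 0) * f x = f c := by
  simp [ite_mul]

lemma nash_payoff_eq {lam : Θ → ℝ} {u₁ u₂ : Θ → S → A → ℝ} {π₁ : Θ → S → ℝ}
    {π₂ : S → A → ℝ} (h : NashEq lam u₁ u₂ π₁ π₂) (θ : Θ) {s0 : S} (h0 : π₁ θ s0 ≠ 0) :
    eqPayoff u₁ π₁ π₂ θ = u1R u₁ π₂ θ s0 := by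
  have hglob := h.2.2.1
  have hterm : ∀ t, π₁ θ t * u1R u₁ π₂ θ t = π₁ θ t * u1R u₁ π₂ θ s0 := by
    intro t
    by_cases ht : π₁ θ t = 0
    · simp [ht]
    · have h1 := hglob θ t ht s0
      have h2 := hglob θ s0 h0 t
      rw [le_antisymm h2 h1]
  unfold eqPayoff
  rw [Finset.sum_congr rfl (fun t _ => hterm t), ← Finset.sum_mul, (h.1 θ).2, one_mul]

lemma nash_payoff_le {lam : Θ → ℝ} {u₁ u₂ : Θ → S → A → ℝ} {π₁ : Θ → S → ℝ}
    {π₂ : S → A → ℝ} (h : NashEq lam u₁ u₂ π₁ π₂) (θ : Θ) (s' : S) :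
    u1R u₁ π₂ θ s' ≤ eqPayoff u₁ π₁ π₂ θ := by
  obtain ⟨s0, h0⟩ := isDist_exists_ne (h.1 θ)
  rw [nash_payoff_eq h θ h0]
  exact h.2.2.1 θ s0 h0 s'

lemma expU2m_eq (u₂ : Θ → S → A → ℝ) (p : Θ → ℝ) (s : S) (α : A → ℝ) :
    expU2m u₂ p s α = ∑ a, α a * expU2 u₂ p s a := by
  unfold expU2m expU2
  simp only [Finset.mul_sum]
  rw [Finset.sum_comm]
  exact Finset.sum_congr rfl fun a _ => Finset.sum_congr rfl fun θ _ => by ring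

lemma brb_nonempty [Nonempty A] (u₂ : Θ → S → A → ℝ) (p : Θ → ℝ) (s : S) :
    ∃ a, a ∈ BRb u₂ p s := by
  obtain ⟨a, -, ha⟩ := Finset.exists_max_image (Finset.univ : Finset A) (expU2 u₂ p s)
    ⟨Classical.arbitrary A, Finset.mem_univ _⟩
  exact ⟨a, fun a' => ha a' (Finset.mem_univ _)⟩

lemma mbr_support [Nonempty A] {u₂ : Θ → S → A → ℝ} {p : Θ → ℝ} {s : S} {α : A → ℝ}
    (hα : α ∈ MBRb u₂ p s) {a0 : A} (ha0 : α a0 ≠ 0) : a0 ∈ BRb u₂ p s := by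
  obtain ⟨hd, hopt⟩ := hα
  obtain ⟨astar, hstar⟩ := brb_nonempty u₂ p s
  by_contra hc
  have h1 : expU2 u₂ p s a0 < expU2 u₂ p s astar := by
    simp only [BRb, Set.mem_setOf_eq] at hc
    push_neg at hc
    obtain ⟨a1, ha1⟩ := hc
    exact lt_of_lt_of_le ha1 (hstar a1)
  have hstr : ∑ a, α a * expU2 u₂ p s a < ∑ a, α a * expU2 u₂ p s astar := by
    apply Finset.sum_lt_sum
    · exact fun a _ => mul_le_mul_of_nonneg_left (hstar a) (hd.1 a)
    · exact ⟨a0, Finset.mem_univ _,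
        mul_lt_mul_of_pos_left h1 (lt_of_le_of_ne (hd.1 a0) (Ne.symm ha0))⟩
  have heq : ∑ a, α a * expU2 u₂ p s astar = expU2 u₂ p s astar := by
    rw [← Finset.sum_mul, hd.2, one_mul]
  have hge : expU2 u₂ p s astar ≤ ∑ a, α a * expU2 u₂ p s a := by
    have h2 := hopt (fun a => if a = astar then (1 : ℝ) else 0) (pointmass_isDist astar)
    rw [expU2m_eq, expU2m_eq, sum_pointmass] at h2
    exact h2
  linarith

lemma onpath_rational {lam : Θ → ℝ} (hpos : ∀ θ, 0 < lam θ) {u₁ u₂ : Θ → S → A → ℝ}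
    {π₁ : Θ → S → ℝ} {π₂ : S → A → ℝ} (h : NashEq lam u₁ u₂ π₁ π₂) {t : S}
    (hop : ∃ θ, π₁ θ t ≠ 0) {a : A} (ha : π₂ t a ≠ 0) : a ∈ ABR u₂ t := by
  obtain ⟨θ0, hθ0⟩ := hop
  set c := ∑ θ, lam θ * π₁ θ t with hc
  have hterm : ∀ θ, 0 ≤ lam θ * π₁ θ t := fun θ => mul_nonneg (hpos θ).le ((h.1 θ).1 t)
  have hcpos : 0 < c := by
    have h0 : 0 < lam θ0 * π₁ θ0 t :=
      mul_pos (hpos θ0) (lt_of_le_of_ne ((h.1 θ0).1 t) (Ne.symm hθ0))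
    exact lt_of_lt_of_le h0 (Finset.single_le_sum (fun θ _ => hterm θ) (Finset.mem_univ θ0))
  refine ⟨fun θ => lam θ * π₁ θ t / c, ⟨fun θ => div_nonneg (hterm θ) hcpos.le, ?_⟩, ?_⟩
  · rw [← Finset.sum_div, ← hc, div_self hcpos.ne']
  · intro a'
    have hineq := h.2.2.2 t ⟨θ0, hθ0⟩ a ha a'
    have hrw : ∀ b : A, expU2 u₂ (fun θ => lam θ * π₁ θ t / c) t b
        = (∑ θ, lam θ * π₁ θ t * u₂ θ t b) / c := by
      intro b
      unfold expU2
      rw [Finset.sum_div]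
      exact Finset.sum_congr rfl fun θ _ => by ring
    rw [hrw, hrw]
    exact (div_le_div_iff_of_pos_right hcpos).mpr hineq

lemma weakbest_mem_Ph {lam : Θ → ℝ} (hpos : ∀ θ, 0 < lam θ) (u₁ u₂ : Θ → S → A → ℝ) (t : S)
    (hW : ∃ θ0 π₂', Rational2 u₂ π₂' ∧ WeakBest u₁ π₂' θ0 t) :
    (Ph lam u₁ u₂ t).Nonempty := by
  classical
  set W : Θ → Prop := fun θ => ∃ π₂', Rational2 u₂ π₂' ∧ WeakBest u₁ π₂' θ t with hWdef
  set c := ∑ θ ∈ Finset.univ.filter W, lam θ with hc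
  obtain ⟨θ0, hθ0⟩ := hW
  have hθ0W : W θ0 := hθ0
  have hcpos : 0 < c := Finset.sum_pos (fun θ _ => hpos θ)
    ⟨θ0, Finset.mem_filter.mpr ⟨Finset.mem_univ _, hθ0W⟩⟩
  have hWglob : ∀ θ, W θ → θ ∈ Θtypes u₁ t := by
    rintro θ ⟨π₂', hr, hwb⟩
    refine ⟨π₂', hr.1, fun s' => ?_⟩
    by_cases hs' : s' = t
    · rw [hs']
    · exact hwb s' hs'
  refine ⟨fun θ => if W θ then lam θ / c else 0, ⟨⟨?_, ?_⟩, ?_⟩, ?_⟩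
  · intro θ
    by_cases hw : W θ <;> simp [hw, div_nonneg (hpos θ).le hcpos.le]
  · rw [← Finset.sum_filter, ← Finset.sum_div, ← hc, div_self hcpos.ne']
  · intro θ hθ
    have : ¬ W θ := fun hw => hθ (hWglob θ hw)
    simp [this]
  · intro θ' θ'' hmc
    unfold OddsLe
    by_cases hw'' : W θ''
    · obtain ⟨π₂', hr, hwb⟩ := hw''
      have hsb := hmc π₂' hr hwb
      have hw' : W θ' := ⟨π₂', hr, fun s' hs' => (hsb s' hs').le⟩
      have hw2 : W θ'' := ⟨π₂', hr, hwb⟩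
      simp only [hw', hw2, if_pos]
      exact le_of_eq (by ring)
    · simp only [hw'', if_neg, not_false_iff]
      have h2 : (0:ℝ) ≤ lam θ'' * (if W θ' then lam θ' / c else 0) := by
        by_cases hw' : W θ'
        · simp only [hw', if_pos]
          exact mul_nonneg (hpos θ'').le (div_nonneg (hpos θ').le hcpos.le)
        · simp [hw']
      simpa using h2

/-- at a uRCE, if `s` is off-path and `D°(θ_s,s;π*) ⊄ ∪_{θ'≠θ_s} D(θ',s;π*)`,
then `s ∈ S_{θ_s}`, no other type is more rationally compatible with `s` than `θ_s`,
the point mass on `θ_s` lies in `P̂(s)`, and replacing `π₂*(·|s)` by a point mass on any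
best response to that belief yields again a uRCE. -/
theorem NWBR_surviving_type [Nonempty Θ] [Nonempty A] (hS : 1 < Fintype.card S)
    (lam : Θ → ℝ) (hpos : ∀ θ, 0 < lam θ) (hsum : ∑ θ, lam θ = 1)
    (u₁ u₂ : Θ → S → A → ℝ) (π₁ : Θ → S → ℝ) (π₂ : S → A → ℝ)
    (h : URCE lam u₁ u₂ π₁ π₂)
    (s : S) (hoff : OffPath π₁ s) (θs : Θ)
    (hns : ¬ (D0set u₁ u₂ π₁ π₂ θs s
        ⊆ {α | ∃ θ', θ' ≠ θs ∧ α ∈ Dset u₁ u₂ π₁ π₂ θ' s})) :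
    s ∈ Sθ u₁ θs ∧
    (∀ θ', θ' ≠ θs → ¬ MoreCompat u₁ u₂ s θ' θs) ∧
    (fun θ' => if θ' = θs then (1 : ℝ) else 0) ∈ Ph lam u₁ u₂ s ∧
    ∀ astar : A, astar ∈ BRb u₂ (fun θ' => if θ' = θs then (1 : ℝ) else 0) s →
      URCE lam u₁ u₂ π₁
        (fun s' a => if s' = s then (if a = astar then 1 else 0) else π₂ s' a) := by
  classical
  obtain ⟨hne, hcap⟩ := h
  rw [Set.not_subset] at hns
  obtain ⟨α, hα0, hαn⟩ := hns
  obtain ⟨hαMBR, hαeq⟩ := hα0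
  obtain ⟨p0, hp0, hαmbr⟩ := hαMBR
  have hαdist : IsDist α := hαmbr.1
  simp only [Set.mem_setOf_eq, not_exists] at hαn
  have hαle : ∀ θ', θ' ≠ θs → u1m u₁ θ' s α ≤ eqPayoff u₁ π₁ π₂ θ' := by
    intro θ' hθ'
    by_contra hlt
    push_neg at hlt
    exact hαn θ' ⟨hθ', ⟨p0, hp0, hαmbr⟩, hlt⟩
  -- Part (i)
  have hSθ : s ∈ Sθ u₁ θs := by
    refine ⟨fun t a => if t = s then α a else π₂ t a, ?_, ?_⟩
    · intro t
      by_cases ht : t = s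
      · simpa [ht] using hαdist
      · simpa [ht] using hne.2.1 t
    · intro s'
      have hs : u1R u₁ (fun t a => if t = s then α a else π₂ t a) θs s = u1m u₁ θs s α := by
        unfold u1R u1m; simp
      by_cases hs' : s' = s
      · rw [hs']
      · have hrw : u1R u₁ (fun t a => if t = s then α a else π₂ t a) θs s'
            = u1R u₁ π₂ θs s' := by
          unfold u1R; simp [hs']
        rw [hs, hrw, ← hαeq]
        exact nash_payoff_le hne θs s'
  -- pick good actions at off-path signals
  have hpickex : ∀ t : S, ∃ a : A, a ∈ ABR u₂ t ∧
      (OffPath π₁ t → (Ph lam u₁ u₂ t).Nonempty →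
        ∀ θ, u₁ θ t a ≤ eqPayoff u₁ π₁ π₂ θ) := by
    intro t
    by_cases hph : (Ph lam u₁ u₂ t).Nonempty
    · obtain ⟨p, hp⟩ := hph
      obtain ⟨⟨hpd, hpsupp⟩, hpodds⟩ := hp
      obtain ⟨a, ha⟩ := brb_nonempty u₂ p t
      exact ⟨a, ⟨p, hpd, ha⟩, fun hofft _ θ =>
        hcap θ t hofft a ⟨p, ⟨⟨hpd, hpsupp⟩, hpodds⟩, ha⟩⟩
    · obtain ⟨a, ha⟩ := brb_nonempty u₂ (fun θ' => if θ' = θs then (1:ℝ) else 0) t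
      exact ⟨a, ⟨_, pointmass_isDist θs, ha⟩, fun _ hph' => absurd hph' hph⟩
  choose pick hpickABR hpickCap using hpickex
  set Q : S → A → ℝ := fun t a =>
    if t = s then α a
    else if (∃ θ, π₁ θ t ≠ 0) then π₂ t a
    else if a = pick t then 1 else 0 with hQ
  have hQs : ∀ θ, u1R u₁ Q θ s = u1m u₁ θ s α := by
    intro θ; unfold u1R u1m; simp [hQ]
  have hQon : ∀ θ t, t ≠ s → (∃ θ0, π₁ θ0 t ≠ 0) → u1R u₁ Q θ t = u1R u₁ π₂ θ t := by
    intro θ t ht hop; unfold u1R; simp [hQ, ht, hop]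
  have hQoff : ∀ θ t, t ≠ s → ¬ (∃ θ0, π₁ θ0 t ≠ 0) →
      u1R u₁ Q θ t = u₁ θ t (pick t) := by
    intro θ t ht hop
    unfold u1R
    have : ∀ a, Q t a = if a = pick t then (1:ℝ) else 0 := by
      intro a; simp [hQ, ht, hop]
    rw [Finset.sum_congr rfl fun a _ => by rw [this a]]
    exact sum_pointmass (pick t) (u₁ θ t)
  have hQdist : ∀ t, IsDist (Q t) := by
    intro t
    by_cases ht : t = s
    · simpa [hQ, ht] using hαdist
    by_cases hop : (∃ θ, π₁ θ t ≠ 0)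
    · simpa [hQ, ht, hop] using hne.2.1 t
    · simpa [hQ, ht, hop] using pointmass_isDist (pick t)
  have hQrat : Rational2 u₂ Q := by
    refine ⟨hQdist, ?_⟩
    intro t a ha
    by_cases ht : t = s
    · subst ht
      have haa : α a ≠ 0 := by simpa [hQ] using ha
      exact ⟨p0, hp0, mbr_support hαmbr haa⟩
    by_cases hop : (∃ θ, π₁ θ t ≠ 0)
    · exact onpath_rational hpos hne hop (by simpa [hQ, ht, hop] using ha)
    · have hap : a = pick t := by
        by_contra hne'
        simp [hQ, ht, hop, hne'] at ha
      rw [hap]; exact hpickABR t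
  -- bound for "bad" off-path signals with empty P-hat
  have hbad : ∀ t, t ≠ s → OffPath π₁ t → ¬(Ph lam u₁ u₂ t).Nonempty →
      u1R u₁ Q θs t ≤ eqPayoff u₁ π₁ π₂ θs := by
    set T : Finset S := Finset.univ.filter
      (fun t => t ≠ s ∧ OffPath π₁ t ∧ ¬(Ph lam u₁ u₂ t).Nonempty) with hT
    intro t ht1 ht2 ht3
    have htT : t ∈ T := Finset.mem_filter.mpr ⟨Finset.mem_univ t, ht1, ht2, ht3⟩
    obtain ⟨m, hmT, hmax⟩ := Finset.exists_max_image T (u1R u₁ Q θs) ⟨t, htT⟩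
    obtain ⟨-, hm1, hm2, hm3⟩ := Finset.mem_filter.mp hmT
    have hnW : ¬ WeakBest u₁ Q θs m := fun hwb =>
      hm3 (weakbest_mem_Ph hpos u₁ u₂ m ⟨θs, Q, hQrat, hwb⟩)
    simp only [WeakBest, not_forall, not_le] at hnW
    obtain ⟨w, hw1, hw2⟩ := hnW
    have hwT : w ∉ T := fun hwT => absurd (hmax w hwT) (not_le.mpr hw2)
    have hwle : u1R u₁ Q θs w ≤ eqPayoff u₁ π₁ π₂ θs := by
      by_cases hws : w = s
      · rw [hws, hQs θs, ← hαeq]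
      by_cases hwop : ∃ θ0, π₁ θ0 w ≠ 0
      · rw [hQon θs w hws hwop]; exact nash_payoff_le hne θs w
      · have hwoff : OffPath π₁ w := by
          intro θ; by_contra hcc; exact hwop ⟨θ, hcc⟩
        have hwph : (Ph lam u₁ u₂ w).Nonempty := by
          by_contra hc
          exact hwT (Finset.mem_filter.mpr ⟨Finset.mem_univ w, hws, hwoff, hc⟩)
        rw [hQoff θs w hws hwop]
        exact hpickCap w hwoff hwph θs
    linarith [hmax t htT, hw2, hwle]
  have hQany : ∀ t, u1R u₁ Q θs t ≤ eqPayoff u₁ π₁ π₂ θs := by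
    intro t
    by_cases ht : t = s
    · rw [ht, hQs, ← hαeq]
    by_cases hop : ∃ θ0, π₁ θ0 t ≠ 0
    · rw [hQon θs t ht hop]; exact nash_payoff_le hne θs t
    · have htoff : OffPath π₁ t := by
        intro θ; by_contra hcc; exact hop ⟨θ, hcc⟩
      by_cases hph : (Ph lam u₁ u₂ t).Nonempty
      · rw [hQoff θs t ht hop]; exact hpickCap t htoff hph θs
      · exact hbad t ht htoff hph
  have hwbs : WeakBest u₁ Q θs s := by
    intro s' _
    calc u1R u₁ Q θs s' ≤ eqPayoff u₁ π₁ π₂ θs := hQany s'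
    _ = u1m u₁ θs s α := hαeq
    _ = u1R u₁ Q θs s := (hQs θs).symm
  -- Part (ii)
  have hnc : ∀ θ', θ' ≠ θs → ¬ MoreCompat u₁ u₂ s θ' θs := by
    intro θ' hθ' hmc
    have hsb := hmc Q hQrat hwbs
    obtain ⟨s0, hs0⟩ := isDist_exists_ne (hne.1 θ')
    have hs0ne : s0 ≠ s := fun hcc => hs0 (by rw [hcc]; exact hoff θ')
    have h1 : u1R u₁ Q θ' s0 < u1R u₁ Q θ' s := hsb s0 hs0ne
    have h2 : u1R u₁ Q θ' s0 = eqPayoff u₁ π₁ π₂ θ' := by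
      rw [hQon θ' s0 hs0ne ⟨θ', hs0⟩]
      exact (nash_payoff_eq hne θ' hs0).symm
    rw [hQs θ'] at h1
    have h3 := hαle θ' hθ'
    linarith
  -- Part (iii)
  have hpm : (fun θ' => if θ' = θs then (1:ℝ) else 0) ∈ Ph lam u₁ u₂ s := by
    refine ⟨⟨pointmass_isDist θs, ?_⟩, ?_⟩
    · intro θ hθ
      by_cases hc : θ = θs
      · exact absurd (show θ ∈ Θtypes u₁ s from by rw [hc]; exact hSθ) hθ
      · simp [hc]
    · intro θ' θ'' hmc
      unfold OddsLe
      by_cases h2 : θ'' = θs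
      · subst h2
        by_cases h1 : θ' = θ''
        · subst h1; simp
        · exact absurd hmc (hnc θ' h1)
      · simp only [h2, if_neg, not_false_iff, zero_mul]
        by_cases h1 : θ' = θs
        · simp only [h1, if_pos, mul_one]
          exact (hpos θ'').le
        · simp [h1]
  refine ⟨hSθ, hnc, hpm, ?_⟩
  -- Part (iv)
  intro astar hastar
  set R : S → A → ℝ := fun s' a => if s' = s then (if a = astar then 1 else 0) else π₂ s' a
    with hR
  have hcapstar : ∀ θ, u₁ θ s astar ≤ eqPayoff u₁ π₁ π₂ θ :=
    fun θ => hcap θ s hoff astar ⟨_, hpm, hastar⟩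
  have hRu1R : ∀ θ t, t ≠ s → u1R u₁ R θ t = u1R u₁ π₂ θ t := by
    intro θ t ht; unfold u1R; simp [hR, ht]
  have hRs : ∀ θ, u1R u₁ R θ s = u₁ θ s astar := by
    intro θ
    unfold u1R
    have hq : ∀ a, R s a = if a = astar then (1:ℝ) else 0 := by intro a; simp [hR]
    rw [Finset.sum_congr rfl fun a _ => by rw [hq a]]
    exact sum_pointmass astar (u₁ θ s)
  have hEq : ∀ θ, eqPayoff u₁ π₁ R θ = eqPayoff u₁ π₁ π₂ θ := by
    intro θ
    unfold eqPayoff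
    apply Finset.sum_congr rfl
    intro t _
    by_cases ht : t = s
    · rw [ht, hoff θ]; ring
    · rw [hRu1R θ t ht]
  refine ⟨⟨hne.1, ?_, ?_, ?_⟩, ?_⟩
  · intro t
    by_cases ht : t = s
    · simpa [hR, ht] using pointmass_isDist astar
    · simpa [hR, ht] using hne.2.1 t
  · intro θ t htne0
    have hts : t ≠ s := fun hcc => htne0 (by rw [hcc]; exact hoff θ)
    intro t'
    by_cases ht' : t' = s
    · rw [ht', hRs θ, hRu1R θ t hts]
      calc u₁ θ s astar ≤ eqPayoff u₁ π₁ π₂ θ := hcapstar θ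
      _ = u1R u₁ π₂ θ t := nash_payoff_eq hne θ htne0
    · rw [hRu1R θ t' ht', hRu1R θ t hts]
      exact hne.2.2.1 θ t htne0 t'
  · intro t hop a ha a'
    have hts : t ≠ s := by
      obtain ⟨θ0, h0⟩ := hop
      exact fun hcc => h0 (by rw [hcc]; exact hoff θ0)
    have hRa : R t a = π₂ t a := by simp [hR, hts]
    exact hne.2.2.2 t hop a (by rwa [hRa] at ha) a'
  · intro θ t htoff a hBR
    rw [hEq θ]
    exact hcap θ t htoff a hBR

end
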